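/- Let I ⊆ ℝ^n be a nonempty closed convex cone, S a linear subspace of ℝ^n with S ⊆ I, and D := −I. Then 0 ≤ T(y) ≤ 1 for every y ∉ S, and for all ε, ε̂ ∈ ℝ^n with ε ∉ S and ε̂ ∉ S, |√(T(ε)) − √(T(ε̂))| ≤ 4‖ε − ε̂‖ / ‖ε − Π(ε|S)‖. -/

import Mathlib

/-- The metric projection onto a subset `K` of `ℝⁿ`: the (for nonempty closed convex `K`,
unique) point of `K` nearest to `y`. -/
noncomputable def proj {n : ℕ} (K : Set (EuclideanSpace ℝ (Fin n)))
    (y : EuclideanSpace ℝ (Fin n)) : EuclideanSpace ℝ (Fin n) := by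
  classical exact if h : ∃ p ∈ K, ∀ q ∈ K, ‖y - p‖ ≤ ‖y - q‖ then h.choose else 0

/-- The double-cone statistic
`T(y) := max{‖Π(y|S) − Π(y|I)‖², ‖Π(y|S) − Π(y|D)‖²} / ‖y − Π(y|S)‖²` for `y ∉ S`
(and `T(y) := 0` for `y ∈ S`). -/
noncomputable def Tstat {n : ℕ} (S I D : Set (EuclideanSpace ℝ (Fin n)))
    (y : EuclideanSpace ℝ (Fin n)) : ℝ := by
  classical exact if y ∈ S then 0
    else max (‖proj S y - proj I y‖ ^ 2) (‖proj S y - proj D y‖ ^ 2) / ‖y - proj S y‖ ^ 2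

/-- for a nonempty closed convex cone `I`, a linear subspace `S ⊆ I`, and
`D = −I`, one has `0 ≤ T(y) ≤ 1` for every `y ∉ S`, and the Lipschitz-type bound
`|√T(ε) − √T(ε̂)| ≤ 4‖ε − ε̂‖ / ‖ε − Π(ε|S)‖` for all `ε, ε̂ ∉ S`. -/
lemma proj_spec {n : ℕ} {K : Set (EuclideanSpace ℝ (Fin n))} (hne : K.Nonempty)
    (hclosed : IsClosed K) (hconv : Convex ℝ K) (y : EuclideanSpace ℝ (Fin n)) :
    proj K y ∈ K ∧ ∀ w ∈ K, inner ℝ (y - proj K y) (w - proj K y) ≤ (0:ℝ) := by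
  classical
  obtain ⟨v, hv, hmin⟩ := exists_norm_eq_iInf_of_complete_convex hne hclosed.isComplete hconv y
  have hbdd : BddBelow (Set.range fun w : K => ‖y - (w : EuclideanSpace ℝ (Fin n))‖) :=
    ⟨0, Set.forall_mem_range.2 fun _ => norm_nonneg _⟩
  have hex : ∃ p ∈ K, ∀ q ∈ K, ‖y - p‖ ≤ ‖y - q‖ := by
    refine ⟨v, hv, fun q hq => ?_⟩
    rw [hmin]
    exact ciInf_le hbdd ⟨q, hq⟩
  have hproj : proj K y = hex.choose := by
    unfold proj
    rw [dif_pos hex]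
  obtain ⟨hmem, hle⟩ := hex.choose_spec
  rw [hproj]
  refine ⟨hmem, ?_⟩
  rw [← norm_eq_iInf_iff_real_inner_le_zero hconv hmem]
  haveI : Nonempty K := hne.to_subtype
  exact le_antisymm (le_ciInf fun w => hle w w.2) (ciInf_le hbdd ⟨_, hmem⟩)

/-- Projections onto a closed convex set are 1-Lipschitz. -/
lemma proj_lipschitz {n : ℕ} {K : Set (EuclideanSpace ℝ (Fin n))} (hne : K.Nonempty)
    (hclosed : IsClosed K) (hconv : Convex ℝ K) (a b : EuclideanSpace ℝ (Fin n)) :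
    ‖proj K a - proj K b‖ ≤ ‖a - b‖ := by
  obtain ⟨hma, hva⟩ := proj_spec hne hclosed hconv a
  obtain ⟨hmb, hvb⟩ := proj_spec hne hclosed hconv b
  set pa := proj K a
  set pb := proj K b
  have e1 : inner ℝ (a - pa) (pb - pa) ≤ (0:ℝ) := hva pb hmb
  have e2 : inner ℝ (b - pb) (pa - pb) ≤ (0:ℝ) := hvb pa hma
  have expand : (inner ℝ (a - b) (pa - pb) : ℝ) - inner ℝ (pa - pb) (pa - pb)
      = -(inner ℝ (a - pa) (pb - pa) : ℝ) + -(inner ℝ (b - pb) (pa - pb) : ℝ) := by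
    simp only [inner_sub_left, inner_sub_right]
    ring
  have hself : (inner ℝ (pa - pb) (pa - pb) : ℝ) = ‖pa - pb‖ ^ 2 :=
    real_inner_self_eq_norm_sq _
  have key : ‖pa - pb‖ ^ 2 ≤ inner ℝ (a - b) (pa - pb) := by linarith
  have hcs : (inner ℝ (a - b) (pa - pb) : ℝ) ≤ ‖a - b‖ * ‖pa - pb‖ := real_inner_le_norm _ _
  nlinarith [norm_nonneg (pa - pb), norm_nonneg (a - b)]

/-- The projection onto a subspace: membership and orthogonality of the residual. -/
lemma proj_sub_orth {n : ℕ} (S : Submodule ℝ (EuclideanSpace ℝ (Fin n)))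
    (y : EuclideanSpace ℝ (Fin n)) :
    proj (S : Set (EuclideanSpace ℝ (Fin n))) y ∈ S ∧
      ∀ s ∈ S, inner ℝ (y - proj (S : Set (EuclideanSpace ℝ (Fin n))) y) s = (0:ℝ) := by
  obtain ⟨hm, hv⟩ := proj_spec ⟨0, S.zero_mem⟩ S.closed_of_finiteDimensional S.convex y
  have hm' : proj (S : Set (EuclideanSpace ℝ (Fin n))) y ∈ S := hm
  refine ⟨hm', fun s hs => ?_⟩
  set p := proj (S : Set (EuclideanSpace ℝ (Fin n))) y
  have h1 : inner ℝ (y - p) s ≤ (0:ℝ) := by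
    have := hv (p + s) (S.add_mem hm' hs)
    simpa using this
  have h2 : inner ℝ (y - p) (-s) ≤ (0:ℝ) := by
    have := hv (p - s) (S.sub_mem hm' hs)
    simpa [sub_sub_cancel_left] using this
  rw [inner_neg_right] at h2
  linarith

/-- The residual map `y ↦ y - proj S y` is 1-Lipschitz. -/
lemma residual_lipschitz {n : ℕ} (S : Submodule ℝ (EuclideanSpace ℝ (Fin n)))
    (a b : EuclideanSpace ℝ (Fin n)) :
    ‖(a - proj (S : Set (EuclideanSpace ℝ (Fin n))) a) -
      (b - proj (S : Set (EuclideanSpace ℝ (Fin n))) b)‖ ≤ ‖a - b‖ := by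
  obtain ⟨hma, hoa⟩ := proj_sub_orth S a
  obtain ⟨hmb, hob⟩ := proj_sub_orth S b
  set pa := proj (S : Set (EuclideanSpace ℝ (Fin n))) a
  set pb := proj (S : Set (EuclideanSpace ℝ (Fin n))) b
  set r := (a - pa) - (b - pb)
  have hEq : a - b = r + (pa - pb) := by simp only [r]; abel
  have hcross : inner ℝ r (pa - pb) = (0:ℝ) := by
    have h1 : inner ℝ (a - pa) (pa - pb) = (0:ℝ) := hoa _ (S.sub_mem hma hmb)
    have h2 : inner ℝ (b - pb) (pa - pb) = (0:ℝ) := hob _ (S.sub_mem hma hmb)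
    simp only [r, inner_sub_left]
    rw [inner_sub_left] at h1 h2
    linarith
  have hsq : ‖a - b‖ ^ 2 = ‖r‖ ^ 2 + ‖pa - pb‖ ^ 2 := by
    rw [hEq, norm_add_sq_real, hcross]; ring
  have h2 : ‖r‖ ^ 2 ≤ ‖a - b‖ ^ 2 := by nlinarith [sq_nonneg ‖pa - pb‖]
  exact (pow_le_pow_iff_left₀ (norm_nonneg _) (norm_nonneg _) two_ne_zero).mp h2

/-- Key geometric bound: for a closed convex cone `K` closed under adding elements of `S`,
`‖proj S y - proj K y‖ ≤ ‖y - proj S y‖`. -/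
lemma cone_side {n : ℕ} {K : Set (EuclideanSpace ℝ (Fin n))}
    {S : Submodule ℝ (EuclideanSpace ℝ (Fin n))}
    (hne : K.Nonempty) (hclosed : IsClosed K) (hconv : Convex ℝ K)
    (h0 : (0 : EuclideanSpace ℝ (Fin n)) ∈ K)
    (hcone : ∀ θ ∈ K, ∀ t : ℝ, 0 < t → t • θ ∈ K)
    (hKS : ∀ k ∈ K, ∀ s ∈ S, k + s ∈ K) (y : EuclideanSpace ℝ (Fin n)) :
    ‖proj (S : Set (EuclideanSpace ℝ (Fin n))) y - proj K y‖ ≤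
      ‖y - proj (S : Set (EuclideanSpace ℝ (Fin n))) y‖ := by
  obtain ⟨hqm, hqv⟩ := proj_spec hne hclosed hconv y
  obtain ⟨hpm, hpo⟩ := proj_sub_orth S y
  set p := proj (S : Set (EuclideanSpace ℝ (Fin n))) y
  set q := proj K y
  -- ⟪y - q, q⟫ = 0
  have hq0 : inner ℝ (y - q) q = (0:ℝ) := by
    have h1 : inner ℝ (y - q) (-q) ≤ (0:ℝ) := by
      have := hqv 0 h0
      simpa using this
    have h2 : inner ℝ (y - q) q ≤ (0:ℝ) := by
      have h2q : (2:ℝ) • q ∈ K := hcone q hqm 2 two_pos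
      have := hqv _ h2q
      have hv : (2:ℝ) • q - q = q := by
        rw [two_smul]; abel
      rwa [hv] at this
    rw [inner_neg_right] at h1
    linarith
  -- ⟪y - q, p⟫ = 0
  have hqp : inner ℝ (y - q) p = (0:ℝ) := by
    have h1 : inner ℝ (y - q) p ≤ (0:ℝ) := by
      have := hqv (q + p) (hKS q hqm p hpm)
      simpa using this
    have h2 : inner ℝ (y - q) (-p) ≤ (0:ℝ) := by
      have := hqv (q + (-p)) (hKS q hqm (-p) (S.neg_mem hpm))
      simpa using this
    rw [inner_neg_right] at h2
    linarith
  have hcross : inner ℝ (y - q) (q - p) = (0:ℝ) := by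
    rw [inner_sub_right, hq0, hqp]; ring
  have hEq : y - p = (y - q) + (q - p) := by abel
  have hsq : ‖y - p‖ ^ 2 = ‖y - q‖ ^ 2 + ‖q - p‖ ^ 2 := by
    rw [hEq, norm_add_sq_real, hcross]; ring
  have h2 : ‖p - q‖ ^ 2 ≤ ‖y - p‖ ^ 2 := by
    rw [show p - q = -(q - p) by abel, norm_neg]
    nlinarith [sq_nonneg ‖y - q‖]
  exact (pow_le_pow_iff_left₀ (norm_nonneg _) (norm_nonneg _) two_ne_zero).mp h2

lemma arith_bound {Fa Fb Na Nb d : ℝ} (hd0 : 0 ≤ d) (hNa0 : 0 < Na) (hNb0 : 0 < Nb)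
    (hFb0 : 0 ≤ Fb) (hFbNb : Fb ≤ Nb) (hFF : |Fa - Fb| ≤ 2 * d) (hNN : |Na - Nb| ≤ d) :
    |Fa / Na - Fb / Nb| ≤ 4 * d / Na := by
  obtain ⟨hFF2, hFF1⟩ := abs_le.mp hFF
  obtain ⟨hNN2, hNN1⟩ := abs_le.mp hNN
  have inter1 : Fa * Nb - Fb * Na ≤ 4 * d * Nb := by
    nlinarith [mul_le_mul_of_nonneg_left hFF1 hNb0.le,
      mul_le_mul_of_nonneg_left (show Nb - Na ≤ d by linarith) hFb0,
      mul_le_mul_of_nonneg_right hFbNb hd0]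
  have inter2 : Fb * Na - Fa * Nb ≤ 4 * d * Nb := by
    nlinarith [mul_le_mul_of_nonneg_left (show Fb - Fa ≤ 2 * d by linarith) hNb0.le,
      mul_le_mul_of_nonneg_left (show Na - Nb ≤ d by linarith) hFb0,
      mul_le_mul_of_nonneg_right hFbNb hd0]
  rw [abs_le]
  constructor
  · rw [neg_le, neg_sub]
    rw [div_sub_div _ _ hNb0.ne' hNa0.ne', div_le_div_iff₀ (by positivity) hNa0]
    nlinarith [mul_le_mul_of_nonneg_right inter2 hNa0.le]
  · rw [div_sub_div _ _ hNa0.ne' hNb0.ne', div_le_div_iff₀ (by positivity) hNa0]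
    nlinarith [mul_le_mul_of_nonneg_right inter1 hNa0.le]

theorem stmt4 {n : ℕ} (I : Set (EuclideanSpace ℝ (Fin n)))
    (hne : I.Nonempty) (hclosed : IsClosed I) (hconv : Convex ℝ I)
    (hcone : ∀ θ ∈ I, ∀ t : ℝ, 0 < t → t • θ ∈ I)
    (S : Submodule ℝ (EuclideanSpace ℝ (Fin n)))
    (hSI : (S : Set (EuclideanSpace ℝ (Fin n))) ⊆ I) :
    (∀ y : EuclideanSpace ℝ (Fin n), y ∉ S →
        0 ≤ Tstat (S : Set (EuclideanSpace ℝ (Fin n))) I (-I) y ∧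
        Tstat (S : Set (EuclideanSpace ℝ (Fin n))) I (-I) y ≤ 1) ∧
    (∀ ε εhat : EuclideanSpace ℝ (Fin n), ε ∉ S → εhat ∉ S →
        |Real.sqrt (Tstat (S : Set (EuclideanSpace ℝ (Fin n))) I (-I) ε) -
            Real.sqrt (Tstat (S : Set (EuclideanSpace ℝ (Fin n))) I (-I) εhat)| ≤
          4 * ‖ε - εhat‖ / ‖ε - proj (S : Set (EuclideanSpace ℝ (Fin n))) ε‖) := by
  classical
  have hI0 : (0 : EuclideanSpace ℝ (Fin n)) ∈ I := hSI S.zero_mem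
  have hIS : ∀ k ∈ I, ∀ s ∈ S, k + s ∈ I := by
    intro k hk s hs
    have mid : (1/2 : ℝ) • k + (1/2 : ℝ) • s ∈ I :=
      hconv hk (hSI hs) (by norm_num) (by norm_num) (by norm_num)
    have h2 := hcone _ mid 2 two_pos
    have heq : (2:ℝ) • ((1/2 : ℝ) • k + (1/2 : ℝ) • s) = k + s := by module
    rwa [heq] at h2
  have hDne : (-I).Nonempty := hne.neg
  have hDclosed : IsClosed (-I) := hclosed.neg
  have hDconv : Convex ℝ (-I) := hconv.neg
  have hD0 : (0 : EuclideanSpace ℝ (Fin n)) ∈ -I := by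
    rw [Set.mem_neg, neg_zero]; exact hI0
  have hDcone : ∀ θ ∈ -I, ∀ t : ℝ, 0 < t → t • θ ∈ -I := by
    intro θ hθ t ht
    rw [Set.mem_neg] at hθ ⊢
    have := hcone _ hθ t ht
    rwa [smul_neg, ← neg_neg (t • θ), neg_neg] at this
  have hDS : ∀ k ∈ -I, ∀ s ∈ S, k + s ∈ -I := by
    intro k hk s hs
    rw [Set.mem_neg] at hk ⊢
    have := hIS _ hk _ (S.neg_mem hs)
    rw [show -(k + s) = -k + -s by abel]
    exact this
  -- abbreviations
  set P : EuclideanSpace ℝ (Fin n) → EuclideanSpace ℝ (Fin n) :=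
    fun y => proj (S : Set (EuclideanSpace ℝ (Fin n))) y with hP
  set Q : EuclideanSpace ℝ (Fin n) → EuclideanSpace ℝ (Fin n) := fun y => proj I y with hQ
  set R : EuclideanSpace ℝ (Fin n) → EuclideanSpace ℝ (Fin n) := fun y => proj (-I) y with hR
  have hNpos : ∀ y : EuclideanSpace ℝ (Fin n), y ∉ S → 0 < ‖y - P y‖ := by
    intro y hy
    rw [norm_pos_iff]
    intro h
    exact hy (by rw [sub_eq_zero] at h; rw [h]; exact (proj_sub_orth S y).1)
  have hQle : ∀ y, ‖P y - Q y‖ ≤ ‖y - P y‖ := fun y =>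
    cone_side hne hclosed hconv hI0 hcone hIS y
  have hRle : ∀ y, ‖P y - R y‖ ≤ ‖y - P y‖ := fun y =>
    cone_side hDne hDclosed hDconv hD0 hDcone hDS y
  have hTval : ∀ y : EuclideanSpace ℝ (Fin n), y ∉ S →
      Tstat (S : Set (EuclideanSpace ℝ (Fin n))) I (-I) y
        = max (‖P y - Q y‖ ^ 2) (‖P y - R y‖ ^ 2) / ‖y - P y‖ ^ 2 := by
    intro y hy
    unfold Tstat
    rw [if_neg (by simpa using hy)]
  have hmaxsq : ∀ a b : ℝ, 0 ≤ a → 0 ≤ b → max (a ^ 2) (b ^ 2) = (max a b) ^ 2 := by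
    intro a b ha hb
    rcases le_total a b with h | h
    · rw [max_eq_right h, max_eq_right (by nlinarith)]
    · rw [max_eq_left h, max_eq_left (by nlinarith)]
  have hsqrtT : ∀ y : EuclideanSpace ℝ (Fin n), y ∉ S →
      Real.sqrt (Tstat (S : Set (EuclideanSpace ℝ (Fin n))) I (-I) y)
        = max ‖P y - Q y‖ ‖P y - R y‖ / ‖y - P y‖ := by
    intro y hy
    rw [hTval y hy, hmaxsq _ _ (norm_nonneg _) (norm_nonneg _), ← div_pow,
      Real.sqrt_sq (div_nonneg (le_max_of_le_left (norm_nonneg _)) (norm_nonneg _))]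
  constructor
  · intro y hy
    rw [hTval y hy]
    constructor
    · positivity
    · rw [div_le_one (pow_pos (hNpos y hy) 2)]
      exact max_le (pow_le_pow_left₀ (norm_nonneg _) (hQle y) 2)
        (pow_le_pow_left₀ (norm_nonneg _) (hRle y) 2)
  · intro ε εh hε hεh
    rw [hsqrtT ε hε, hsqrtT εh hεh]
    set δ := ‖ε - εh‖ with hδdef
    have hδ0 : 0 ≤ δ := norm_nonneg _
    set Fa := max ‖P ε - Q ε‖ ‖P ε - R ε‖ with hFa
    set Fb := max ‖P εh - Q εh‖ ‖P εh - R εh‖ with hFb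
    set Na := ‖ε - P ε‖ with hNa
    set Nb := ‖εh - P εh‖ with hNb
    have hNa0 : 0 < Na := hNpos ε hε
    have hNb0 : 0 < Nb := hNpos εh hεh
    have hFa0 : 0 ≤ Fa := le_max_of_le_left (norm_nonneg _)
    have hFb0 : 0 ≤ Fb := le_max_of_le_left (norm_nonneg _)
    have hFaNa : Fa ≤ Na := max_le (hQle ε) (hRle ε)
    have hFbNb : Fb ≤ Nb := max_le (hQle εh) (hRle εh)
    -- Lipschitz bounds
    have hPl : ‖P ε - P εh‖ ≤ δ :=
      proj_lipschitz ⟨0, S.zero_mem⟩ S.closed_of_finiteDimensional S.convex ε εh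
    have hQl : ‖Q ε - Q εh‖ ≤ δ := proj_lipschitz hne hclosed hconv ε εh
    have hRl : ‖R ε - R εh‖ ≤ δ := proj_lipschitz hDne hDclosed hDconv ε εh
    have hterm : ∀ u v : EuclideanSpace ℝ (Fin n), ‖u - v‖ ≤ δ →
        |‖P ε - u‖ - ‖P εh - v‖| ≤ 2 * δ := by
      intro u v huv
      calc |‖P ε - u‖ - ‖P εh - v‖| ≤ ‖(P ε - u) - (P εh - v)‖ := abs_norm_sub_norm_le _ _
        _ = ‖(P ε - P εh) - (u - v)‖ := by rw [show (P ε - u) - (P εh - v)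
              = (P ε - P εh) - (u - v) by abel]
        _ ≤ ‖P ε - P εh‖ + ‖u - v‖ := norm_sub_le _ _
        _ ≤ 2 * δ := by linarith
    have hFF : |Fa - Fb| ≤ 2 * δ := by
      refine le_trans (abs_max_sub_max_le_max _ _ _ _) (max_le ?_ ?_)
      · exact hterm _ _ hQl
      · exact hterm _ _ hRl
    have hNN : |Na - Nb| ≤ δ := by
      calc |Na - Nb| ≤ ‖(ε - P ε) - (εh - P εh)‖ := abs_norm_sub_norm_le _ _
        _ ≤ δ := residual_lipschitz S ε εh
    exact arith_bound hδ0 hNa0 hNb0 hFb0 hFbNb hFF hNN
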